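/- With the inorder numbering of a complete b-ary tree, if u and v are nodes whose assigned number sets both intersect an interval [a,b] of integers, then the assigned number set of the least common ancestor of u and v also intersects [a,b]. Consequently, for every interval I there is a unique node w_I such that w_I's number set meets I and every node whose number set meets I lies in the subtree rooted at w_I. -/

import Mathlib

/-- The inorder-numbering traversal of the complete `b`-ary tree of height `h`,
with nodes identified with their positions (lists of child indices from the
root).  The `n`-th element of `inord b h []` is the `(node, slot)` pair
receiving number `n + 1`. -/
def inord (b : ℕ) : ℕ → List ℕ → List (List ℕ × ℕ)
  | 0, pos => [(pos, 0)]
  | h + 1, pos => (List.range b).flatMap (fun i => inord b h (pos ++ [i]) ++ [(pos, i)])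

/-- `assignedTo b h n u` means that number `n` (1-based) is assigned to the
node `u` by the inorder numbering of the complete `b`-ary tree of height `h`. -/
def assignedTo (b h n : ℕ) (u : List ℕ) : Prop :=
  ∃ s, (inord b h [])[n - 1]? = some (u, s)

/-- The longest common prefix of two positions: the least common ancestor in
the tree of positions. -/
def lcp : List ℕ → List ℕ → List ℕ
  | x :: xs, y :: ys => if x = y then x :: lcp xs ys else []
  | _, _ => []

/-- **Interval/LCA property of the inorder numbering.**  In the complete
`b`-ary tree of height `h` with its inorder numbering, if the number sets of
two nodes `u` and `v` both meet an interval `[a, c] ⊆ [1, N]`, then so does the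
number set of their least common ancestor (longest common prefix).
Consequently, for every such interval `I` there is a unique node `w_I` whose
number set meets `I` and such that every node whose number set meets `I` lies
in the subtree rooted at `w_I` (i.e. has `w_I` as a prefix). -/
lemma lcp_nil (y : List ℕ) : lcp [] y = [] := by cases y <;> rfl
lemma lcp_nil_right (x : List ℕ) : lcp x [] = [] := by cases x <;> rfl
lemma lcp_self : ∀ l : List ℕ, lcp l l = l
  | [] => rfl
  | x :: xs => by simp [lcp, lcp_self xs]
lemma lcp_comm : ∀ x y : List ℕ, lcp x y = lcp y x
  | [], [] => rfl
  | [], _ :: _ => rfl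
  | _ :: _, [] => rfl
  | a :: x, b' :: y => by
    by_cases h : a = b'
    · subst h; simp [lcp, lcp_comm x y]
    · simp [lcp, h, Ne.symm h]
lemma lcp_prefix_left : ∀ x y : List ℕ, lcp x y <+: x
  | [], y => by simp [lcp_nil]
  | _ :: _, [] => by simp [lcp]
  | a :: x, b' :: y => by
    by_cases h : a = b'
    · subst h; simpa [lcp] using (lcp_prefix_left x y)
    · simp [lcp, h]
lemma lcp_prefix_right (x y : List ℕ) : lcp x y <+: y := lcp_comm x y ▸ lcp_prefix_left y x
lemma lcp_append : ∀ p x y : List ℕ, lcp (p ++ x) (p ++ y) = p ++ lcp x y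
  | [], x, y => rfl
  | a :: p, x, y => by simp [lcp, lcp_append p x y]
lemma lcp_ne (a b' : ℕ) (x y : List ℕ) (h : a ≠ b') : lcp (a :: x) (b' :: y) = [] := by
  simp [lcp, h]
lemma lcp_of_prefix_left (l t : List ℕ) : lcp l (l ++ t) = l := by
  have := lcp_append l [] t
  simpa [lcp_nil] using this
lemma lcp_of_prefix_right (l t : List ℕ) : lcp (l ++ t) l = l := by
  rw [lcp_comm]; exact lcp_of_prefix_left l t

lemma length_flatMap_range {α} (f : ℕ → List α) (L : ℕ) :
    ∀ m, (∀ i, (f i).length = L) → ((List.range m).flatMap f).length = m * L := by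
  intro m hf
  induction m with
  | zero => simp
  | succ m ih =>
    rw [List.range_succ, List.flatMap_append, List.length_append, ih]
    simp [hf]; ring

lemma getElem?_flatMap_range {α} (f : ℕ → List α) (L : ℕ)
    (hf : ∀ i, (f i).length = L) :
    ∀ m k, k < m * L → ((List.range m).flatMap f)[k]? = (f (k / L))[k % L]? := by
  intro m
  induction m with
  | zero => intro k hk; omega
  | succ m ih =>
    intro k hk
    rw [List.range_succ, List.flatMap_append]
    by_cases hlt : k < m * L
    · rw [List.getElem?_append_left (by rw [length_flatMap_range f L m hf]; exact hlt), ih k hlt]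
    · have hk1 : m * L ≤ k := not_lt.mp hlt
      rw [List.getElem?_append_right (by rw [length_flatMap_range f L m hf]; exact hk1)]
      rw [length_flatMap_range f L m hf]
      have hk2 : k < m * L + L := by
        have := hk; simpa [Nat.succ_mul] using this
      have hdiv : k / L = m := Nat.div_eq_of_lt_le hk1 (by rw [Nat.succ_mul]; exact hk2)
      have hmod : k % L = k - m * L := by
        conv_lhs => rw [show k = (k - m*L) + m * L by omega]
        rw [Nat.add_mul_mod_self_right]
        exact Nat.mod_eq_of_lt (by omega)
      simp [hdiv, hmod]

def Lh (b : ℕ) : ℕ → ℕ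
  | 0 => 1
  | h + 1 => b * (Lh b h + 1)

lemma length_inord (b : ℕ) : ∀ h pos, (inord b h pos).length = Lh b h := by
  intro h
  induction h with
  | zero => intro pos; rfl
  | succ h ih =>
    intro pos
    rw [inord, Lh, length_flatMap_range _ (Lh b h + 1)]
    intro i; simp [ih]

lemma getElem?_inord_succ (b h : ℕ) (pos : List ℕ) (k : ℕ) (hk : k < b * (Lh b h + 1)) :
    (inord b (h+1) pos)[k]? =
      (inord b h (pos ++ [k / (Lh b h + 1)]) ++ [(pos, k / (Lh b h + 1))])[k % (Lh b h + 1)]? := by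
  rw [inord, getElem?_flatMap_range _ (Lh b h + 1) (fun i => by simp [length_inord]) b k hk]

lemma prefix_of_getElem? (b : ℕ) : ∀ (h : ℕ) (pos : List ℕ) (k : ℕ) (u : List ℕ) (s : ℕ),
    (inord b h pos)[k]? = some (u, s) → pos <+: u := by
  intro h
  induction h with
  | zero =>
    intro pos k u s hg
    rw [inord] at hg
    rcases k with _ | k <;> simp_all
  | succ h ih =>
    intro pos k u s hg
    have hk : k < b * (Lh b h + 1) := by
      by_contra hk
      rw [List.getElem?_eq_none (by rw [length_inord, Lh]; omega)] at hg
      cases hg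
    rw [getElem?_inord_succ b h pos k hk] at hg
    by_cases hm : k % (Lh b h + 1) < Lh b h
    · rw [List.getElem?_append_left (by simp [length_inord]; exact hm)] at hg
      exact (List.prefix_append pos _).trans (ih _ _ _ _ hg)
    · rw [List.getElem?_append_right (by simp [length_inord]; omega)] at hg
      have : k % (Lh b h + 1) = Lh b h := by
        have := Nat.mod_lt k (show 0 < Lh b h + 1 by omega); omega
      rw [this, length_inord] at hg
      simp at hg
      simp [hg.1]

lemma bound_of_getElem? (b h : ℕ) (pos : List ℕ) (k : ℕ) (u : List ℕ) (s : ℕ)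
    (hg : (inord b h pos)[k]? = some (u, s)) : k < Lh b h := by
  by_contra hk
  rw [List.getElem?_eq_none (by rw [length_inord]; omega)] at hg
  cases hg


lemma div_lt_of_lt_mul' {k b L : ℕ} (hL : 0 < L) (hk : k < b * L) : k / L < b :=
  Nat.div_lt_of_lt_mul (by rwa [Nat.mul_comm] at hk)

lemma shape_lemma (b h : ℕ) (pos : List ℕ) (i m : ℕ) (w : List ℕ) (sw : ℕ)
    (hg : (inord b h (pos ++ [i]) ++ [(pos, i)])[m]? = some (w, sw)) :
    (m = Lh b h ∧ w = pos ∧ sw = i) ∨ (m < Lh b h ∧ ∃ t, w = pos ++ i :: t) := by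
  by_cases hm : m < Lh b h
  · right
    refine ⟨hm, ?_⟩
    rw [List.getElem?_append_left (by rw [length_inord]; exact hm)] at hg
    obtain ⟨t, ht⟩ := prefix_of_getElem? b h _ m w sw hg
    exact ⟨t, by rw [← ht]; simp⟩
  · left
    rw [List.getElem?_append_right (by rw [length_inord]; omega), length_inord] at hg
    have h0 : m - Lh b h = 0 := by
      by_contra h0
      rw [List.getElem?_eq_none (by simp; omega)] at hg
      cases hg
    rw [h0] at hg
    simp at hg
    exact ⟨by omega, hg.1.symm, hg.2.symm⟩

lemma sep_entry (b h : ℕ) (pos : List ℕ) (i : ℕ) (hi : i < b) :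
    (inord b (h+1) pos)[i * (Lh b h + 1) + Lh b h]? = some (pos, i) := by
  have hq : i * (Lh b h + 1) + Lh b h < b * (Lh b h + 1) := by
    have : (i + 1) * (Lh b h + 1) ≤ b * (Lh b h + 1) := Nat.mul_le_mul_right _ (by omega)
    have h2 : (i + 1) * (Lh b h + 1) = i * (Lh b h + 1) + (Lh b h + 1) := by ring
    omega
  rw [getElem?_inord_succ b h pos _ hq]
  have hdiv : (i * (Lh b h + 1) + Lh b h) / (Lh b h + 1) = i := by
    rw [Nat.add_comm, Nat.add_mul_div_right _ _ (by omega : 0 < Lh b h + 1),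
      Nat.div_eq_of_lt (by omega)]
    omega
  have hmod : (i * (Lh b h + 1) + Lh b h) % (Lh b h + 1) = Lh b h := by
    rw [Nat.add_comm, Nat.add_mul_mod_self_right, Nat.mod_eq_of_lt (by omega)]
  rw [hdiv, hmod, List.getElem?_append_right (by rw [length_inord]), length_inord]
  simp

lemma inner_entry (b h : ℕ) (pos : List ℕ) (i q' : ℕ) (hi : i < b) (hq : q' < Lh b h) :
    (inord b (h+1) pos)[i * (Lh b h + 1) + q']? = (inord b h (pos ++ [i]))[q']? := by
  have hqb : i * (Lh b h + 1) + q' < b * (Lh b h + 1) := by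
    have : (i + 1) * (Lh b h + 1) ≤ b * (Lh b h + 1) := Nat.mul_le_mul_right _ (by omega)
    have h2 : (i + 1) * (Lh b h + 1) = i * (Lh b h + 1) + (Lh b h + 1) := by ring
    omega
  rw [getElem?_inord_succ b h pos _ hqb]
  have hdiv : (i * (Lh b h + 1) + q') / (Lh b h + 1) = i := by
    rw [Nat.add_comm, Nat.add_mul_div_right _ _ (by omega : 0 < Lh b h + 1),
      Nat.div_eq_of_lt (by omega)]
    omega
  have hmod : (i * (Lh b h + 1) + q') % (Lh b h + 1) = q' := by
    rw [Nat.add_comm, Nat.add_mul_mod_self_right, Nat.mod_eq_of_lt (by omega)]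
  rw [hdiv, hmod, List.getElem?_append_left (by rw [length_inord]; exact hq)]

lemma lcp_main (b : ℕ) : ∀ (h : ℕ) (pos : List ℕ) (p r : ℕ) (u v : List ℕ) (su sv : ℕ),
    p ≤ r →
    (inord b h pos)[p]? = some (u, su) →
    (inord b h pos)[r]? = some (v, sv) →
    ∃ q s, p ≤ q ∧ q ≤ r ∧ (inord b h pos)[q]? = some (lcp u v, s) := by
  intro h
  induction h with
  | zero =>
    intro pos p r u v su sv hpr hu hv
    have hp := bound_of_getElem? b 0 pos p u su hu
    have hr := bound_of_getElem? b 0 pos r v sv hv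
    rw [Lh] at hp hr
    interval_cases p
    interval_cases r
    rw [inord] at hu hv ⊢
    simp at hu hv
    exact ⟨0, 0, le_refl _, le_refl _, by simp [← hu.1, ← hv.1, lcp_self]⟩
  | succ h ih =>
    intro pos p r u v su sv hpr hu hv
    have hp := bound_of_getElem? b _ pos p u su hu
    have hr := bound_of_getElem? b _ pos r v sv hv
    rw [Lh] at hp hr
    have hL0 : 0 < Lh b h + 1 := by omega
    rw [getElem?_inord_succ b h pos p hp] at hu
    rw [getElem?_inord_succ b h pos r hr] at hv
    have hib : p / (Lh b h + 1) < b := div_lt_of_lt_mul' hL0 hp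
    have hjb : r / (Lh b h + 1) < b := div_lt_of_lt_mul' hL0 hr
    have hpmod : p % (Lh b h + 1) < Lh b h + 1 := Nat.mod_lt _ hL0
    have hrmod : r % (Lh b h + 1) < Lh b h + 1 := Nat.mod_lt _ hL0
    have hpe : p / (Lh b h + 1) * (Lh b h + 1) + p % (Lh b h + 1) = p := by
      rw [Nat.mul_comm]; exact Nat.div_add_mod p _
    have hre : r / (Lh b h + 1) * (Lh b h + 1) + r % (Lh b h + 1) = r := by
      rw [Nat.mul_comm]; exact Nat.div_add_mod r _
    have hij : p / (Lh b h + 1) ≤ r / (Lh b h + 1) := Nat.div_le_div_right hpr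
    rcases shape_lemma b h pos _ _ u su hu with ⟨hm, hupos, _⟩ | ⟨hm, tu, htu⟩
    · -- u = pos: p is the separator of its block
      subst hupos
      refine ⟨p, p / (Lh b h + 1), le_refl _, hpr, ?_⟩
      have hlcp : lcp u v = u := by
        rcases shape_lemma b h u _ _ v sv hv with ⟨_, hvpos, _⟩ | ⟨_, tv, htv⟩
        · rw [hvpos, lcp_self]
        · rw [htv]; exact lcp_of_prefix_left u _
      rw [hlcp]
      have := sep_entry b h u _ hib
      rwa [show p / (Lh b h + 1) * (Lh b h + 1) + Lh b h = p by omega] at this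
    · rcases shape_lemma b h pos _ _ v sv hv with ⟨hm', hvpos, _⟩ | ⟨hm', tv, htv⟩
      · -- v = pos: r is the separator of its block
        subst hvpos
        refine ⟨r, r / (Lh b h + 1), hpr, le_refl _, ?_⟩
        have hlcp : lcp u v = v := by rw [htu]; exact lcp_of_prefix_right v _
        rw [hlcp]
        have := sep_entry b h v _ hjb
        rwa [show r / (Lh b h + 1) * (Lh b h + 1) + Lh b h = r by omega] at this
      · -- both inner
        by_cases hcase : p / (Lh b h + 1) = r / (Lh b h + 1)
        · -- same block: apply IH
          rw [← hcase] at hv hre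
          rw [List.getElem?_append_left (by rw [length_inord]; exact hm)] at hu
          rw [List.getElem?_append_left (by rw [length_inord]; exact hm')] at hv
          obtain ⟨q', s, hq1, hq2, hq⟩ :=
            ih (pos ++ [p / (Lh b h + 1)]) _ _ u v su sv (by omega) hu hv
          have hq'b : q' < Lh b h := bound_of_getElem? b h _ q' _ s hq
          refine ⟨p / (Lh b h + 1) * (Lh b h + 1) + q', s, by omega, by omega, ?_⟩
          rw [inner_entry b h pos _ q' hib hq'b]
          exact hq
        · -- different blocks: lcp u v = pos, take the separator of block i
          have hij' : p / (Lh b h + 1) < r / (Lh b h + 1) := lt_of_le_of_ne hij hcase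
          refine ⟨p / (Lh b h + 1) * (Lh b h + 1) + Lh b h, p / (Lh b h + 1), by omega, ?_, ?_⟩
          · have : (p / (Lh b h + 1) + 1) * (Lh b h + 1) ≤ r / (Lh b h + 1) * (Lh b h + 1) :=
              Nat.mul_le_mul_right _ (by omega)
            have h2 : (p / (Lh b h + 1) + 1) * (Lh b h + 1)
                = p / (Lh b h + 1) * (Lh b h + 1) + (Lh b h + 1) := by ring
            omega
          · have hlcp : lcp u v = pos := by
              rw [htu, htv, lcp_append, lcp_ne _ _ _ _ hcase]
              simp
            rw [hlcp]
            exact sep_entry b h pos _ hib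

theorem inorder_interval_lca (b h a c : ℕ) (hb : 2 ≤ b)
    (ha : 1 ≤ a) (hac : a ≤ c) (hc : c ≤ (inord b h []).length) :
    (∀ u v : List ℕ,
      (∃ n, a ≤ n ∧ n ≤ c ∧ assignedTo b h n u) →
      (∃ n, a ≤ n ∧ n ≤ c ∧ assignedTo b h n v) →
      ∃ n, a ≤ n ∧ n ≤ c ∧ assignedTo b h n (lcp u v)) ∧
    (∃! w : List ℕ,
      (∃ n, a ≤ n ∧ n ≤ c ∧ assignedTo b h n w) ∧
      ∀ u : List ℕ, (∃ n, a ≤ n ∧ n ≤ c ∧ assignedTo b h n u) → w <+: u) := by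
  classical
  have part1 : ∀ u v : List ℕ,
      (∃ n, a ≤ n ∧ n ≤ c ∧ assignedTo b h n u) →
      (∃ n, a ≤ n ∧ n ≤ c ∧ assignedTo b h n v) →
      ∃ n, a ≤ n ∧ n ≤ c ∧ assignedTo b h n (lcp u v) := by
    rintro u v ⟨nu, hau, hnu, su, hu⟩ ⟨nv, hav, hnv, sv, hv⟩
    rcases le_total nu nv with hle | hle
    · obtain ⟨q, s, hq1, hq2, hq⟩ :=
        lcp_main b h [] (nu - 1) (nv - 1) u v su sv (by omega) hu hv
      refine ⟨q + 1, by omega, by omega, s, ?_⟩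
      simpa using hq
    · obtain ⟨q, s, hq1, hq2, hq⟩ :=
        lcp_main b h [] (nv - 1) (nu - 1) v u sv su (by omega) hv hu
      refine ⟨q + 1, by omega, by omega, s, ?_⟩
      rw [lcp_comm]
      simpa using hq
  refine ⟨part1, ?_⟩
  have hlen : a - 1 < (inord b h []).length := by omega
  obtain ⟨⟨w0, s0⟩, hw0⟩ : ∃ x, (inord b h [])[a - 1]? = some x :=
    ⟨_, List.getElem?_eq_getElem hlen⟩
  set S : List ℕ → Prop := fun w => ∃ n, a ≤ n ∧ n ≤ c ∧ assignedTo b h n w with hSdef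
  have hw0S : S w0 := ⟨a, le_refl a, hac, s0, hw0⟩
  have hex : ∃ l, ∃ w, S w ∧ w.length = l := ⟨w0.length, w0, hw0S, rfl⟩
  obtain ⟨w, hwS, hwl⟩ := Nat.find_spec hex
  have hmin : ∀ u', S u' → w.length ≤ u'.length := by
    intro u' hu'
    have := Nat.find_min' hex (m := u'.length) ⟨u', hu', rfl⟩
    omega
  have hpref : ∀ u', S u' → w <+: u' := by
    intro u' hu'
    have hlS : S (lcp w u') := part1 w u' hwS hu'
    have h1 : lcp w u' <+: w := lcp_prefix_left w u'
    have h2 := hmin _ hlS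
    have h3 := h1.length_le
    have heq : lcp w u' = w := h1.eq_of_length (by omega)
    rw [← heq]
    exact lcp_prefix_right w u'
  refine ⟨w, ⟨hwS, hpref⟩, ?_⟩
  rintro w' ⟨hw'S, hw'pref⟩
  have h1 := hpref w' hw'S
  have h2 := hw'pref w hwS
  exact h2.eq_of_length (le_antisymm h2.length_le h1.length_le)
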